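/- For every integer p ≥ 1 and every θ ∈ ℝ, one has 2^{−p} Σ_{m ∈ I_p} binom(p, m) exp(i(2m − p)θ) = (1/3)[cos^p θ + ((−1)^{p−1}/2)(cos^p(θ + π/3) + cos^p(θ − π/3))] + i (√3/6)(−1)^{p−1}[cos^p(θ + π/3) − cos^p(θ − π/3)], where I_p := {m ∈ ℕ : m ≤ p and 3 divides p + m − 1}. -/
import Mathlib

open Complex Finset in
private lemma cube_filter_aux (ω : ℂ) (hω3 : ω ^ 3 = 1) (hωs : 1 + ω + ω ^ 2 = 0) (n : ℕ) :
    (if 3 ∣ n then (3 : ℂ) else 0) = 1 + ω ^ n + ω ^ (2 * n) := by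
  have key : ∀ m : ℕ, ω ^ m = ω ^ (m % 3) := by
    intro m
    conv_lhs => rw [← Nat.div_add_mod m 3]
    rw [pow_add, pow_mul, hω3, one_pow, one_mul]
  rw [key n, key (2 * n)]
  have h : n % 3 = 0 ∨ n % 3 = 1 ∨ n % 3 = 2 := by omega
  rcases h with h | h | h
  · have hd : 3 ∣ n := by omega
    have h2 : 2 * n % 3 = 0 := by omega
    rw [if_pos hd, h, h2]; norm_num
  · have hd : ¬ 3 ∣ n := by omega
    have h2 : 2 * n % 3 = 2 := by omega
    rw [if_neg hd, h, h2]; linear_combination -hωs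
  · have hd : ¬ 3 ∣ n := by omega
    have h2 : 2 * n % 3 = 1 := by omega
    rw [if_neg hd, h, h2]; linear_combination -hωs

/-- Evaluation on the unit circle of `f(z) = 2^{−p} Σ_{m ∈ I_p} C(p,m) z^m z̄^{p−m}`
(Appendix D.1, proof of Lemma 3.1), where `I_p = {m ≤ p : 3 ∣ p + m − 1}`. -/
theorem stmt_8 (p : ℕ) (hp : 1 ≤ p) (θ : ℝ) :
    ((2 : ℂ) ^ p)⁻¹ * ∑ m ∈ (Finset.range (p + 1)).filter (fun m => 3 ∣ p + m - 1),
        (p.choose m : ℂ) * Complex.exp (Complex.I * (((2 * (m : ℝ) - (p : ℝ)) * θ : ℝ) : ℂ)) =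
      ((1 / 3 * (Real.cos θ ^ p +
          (-1 : ℝ) ^ (p - 1) / 2 *
            (Real.cos (θ + Real.pi / 3) ^ p + Real.cos (θ - Real.pi / 3) ^ p)) : ℝ) : ℂ) +
        Complex.I * ((Real.sqrt 3 / 6 * (-1 : ℝ) ^ (p - 1) *
          (Real.cos (θ + Real.pi / 3) ^ p - Real.cos (θ - Real.pi / 3) ^ p) : ℝ) : ℂ) := by
  open Complex Finset in
  have h3 : (Real.sqrt 3 : ℂ) ^ 2 = 3 := by
    rw [← Complex.ofReal_pow, Real.sq_sqrt (by norm_num : (0:ℝ) ≤ 3)]; norm_num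
  have hu3 : ((1 + (Real.sqrt 3 : ℂ) * Complex.I) / 2) ^ 3 = -1 := by
    linear_combination ((3 * Complex.I ^ 2 + (Real.sqrt 3 : ℂ) * Complex.I ^ 3) / 8) * h3 +
      ((9 + 3 * (Real.sqrt 3 : ℂ) * Complex.I) / 8) * Complex.I_sq
  have hωu : ((-1 + (Real.sqrt 3 : ℂ) * Complex.I) / 2) = ((1 + (Real.sqrt 3 : ℂ) * Complex.I) / 2) ^ 2 := by
    linear_combination (-Complex.I ^ 2 / 4) * h3 + (-3 / 4) * Complex.I_sq
  have hω3 : ((-1 + (Real.sqrt 3 : ℂ) * Complex.I) / 2) ^ 3 = 1 := by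
    rw [hωu, ← pow_mul, show 2 * 3 = 3 * 2 from rfl, pow_mul, hu3]; norm_num
  have hωs : 1 + ((-1 + (Real.sqrt 3 : ℂ) * Complex.I) / 2) + ((-1 + (Real.sqrt 3 : ℂ) * Complex.I) / 2) ^ 2 = 0 := by
    linear_combination (Complex.I ^ 2 / 4) * h3 + (3 / 4) * Complex.I_sq
  have ha : Complex.exp (Complex.I * (θ:ℂ)) = ((Real.cos θ : ℝ) : ℂ) + ((Real.sin θ : ℝ) : ℂ) * Complex.I := by
    rw [mul_comm, Complex.exp_mul_I, Complex.ofReal_cos, Complex.ofReal_sin]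
  have hb : Complex.exp (-(Complex.I * (θ:ℂ))) = ((Real.cos θ : ℝ) : ℂ) - ((Real.sin θ : ℝ) : ℂ) * Complex.I := by
    rw [show -(Complex.I * (θ:ℂ)) = ((-θ : ℝ) : ℂ) * Complex.I by push_cast; ring,
      Complex.exp_mul_I, Complex.ofReal_cos, Complex.ofReal_sin]
    push_cast
    rw [Complex.cos_neg, Complex.sin_neg]
    ring
  have hA : ((Real.cos (θ + Real.pi / 3) : ℝ) : ℂ) = ((Real.cos θ : ℝ) : ℂ) / 2 - (Real.sqrt 3 : ℂ) * ((Real.sin θ : ℝ) : ℂ) / 2 := by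
    rw [Real.cos_add, Real.cos_pi_div_three, Real.sin_pi_div_three]
    push_cast [-Complex.ofReal_cos, -Complex.ofReal_sin]
    ring
  have hB : ((Real.cos (θ - Real.pi / 3) : ℝ) : ℂ) = ((Real.cos θ : ℝ) : ℂ) / 2 + (Real.sqrt 3 : ℂ) * ((Real.sin θ : ℝ) : ℂ) / 2 := by
    rw [Real.cos_sub, Real.cos_pi_div_three, Real.sin_pi_div_three]
    push_cast [-Complex.ofReal_cos, -Complex.ofReal_sin]
    ring
  have e1 : Complex.exp (Complex.I * (θ:ℂ)) + Complex.exp (-(Complex.I * (θ:ℂ))) = 2 * ((Real.cos θ : ℝ) : ℂ) := by rw [ha, hb]; ring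
  have e2 : ((-1 + (Real.sqrt 3 : ℂ) * Complex.I) / 2) * Complex.exp (Complex.I * (θ:ℂ)) + Complex.exp (-(Complex.I * (θ:ℂ))) = 2 * (((1 + (Real.sqrt 3 : ℂ) * Complex.I) / 2) * ((Real.cos (θ + Real.pi / 3) : ℝ) : ℂ)) := by
    rw [ha, hb, hA]
    linear_combination (((Real.sin θ : ℝ) : ℂ) * Complex.I / 2) * h3 + ((Real.sqrt 3 : ℂ) * ((Real.sin θ : ℝ) : ℂ) / 2) * Complex.I_sq
  have e3 : ((-1 + (Real.sqrt 3 : ℂ) * Complex.I) / 2) ^ 2 * Complex.exp (Complex.I * (θ:ℂ)) + Complex.exp (-(Complex.I * (θ:ℂ))) = -2 * (((-1 + (Real.sqrt 3 : ℂ) * Complex.I) / 2) * ((Real.cos (θ - Real.pi / 3) : ℝ) : ℂ)) := by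
    rw [ha, hb, hB]
    linear_combination (((Real.sin θ : ℝ) : ℂ) * Complex.I / 2 + Complex.I ^ 2 * ((Real.cos θ : ℝ) : ℂ) / 4 + Complex.I ^ 3 * ((Real.sin θ : ℝ) : ℂ) / 4) * h3 +
      (-((Real.sqrt 3 : ℂ) * ((Real.sin θ : ℝ) : ℂ)) / 2 + 3 * Complex.I * ((Real.sin θ : ℝ) : ℂ) / 4 + 3 * ((Real.cos θ : ℝ) : ℂ) / 4) * Complex.I_sq
  have hE : ∀ m : ℕ, m ≤ p →
      Complex.exp (Complex.I * (((2 * (m : ℝ) - (p : ℝ)) * θ : ℝ) : ℂ)) = Complex.exp (Complex.I * (θ:ℂ)) ^ m * Complex.exp (-(Complex.I * (θ:ℂ))) ^ (p - m) := by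
    intro m hm
    rw [← Complex.exp_nat_mul, ← Complex.exp_nat_mul, ← Complex.exp_add]
    congr 1
    push_cast [hm]
    ring
  have binom : ∀ x : ℂ, ∑ m ∈ range (p + 1), (p.choose m : ℂ) * ((x * Complex.exp (Complex.I * (θ:ℂ))) ^ m * Complex.exp (-(Complex.I * (θ:ℂ))) ^ (p - m))
      = (x * Complex.exp (Complex.I * (θ:ℂ)) + Complex.exp (-(Complex.I * (θ:ℂ)))) ^ p := by
    intro x
    rw [add_pow]
    exact Finset.sum_congr rfl fun m _ => by ring
  have hsum : ∑ m ∈ (Finset.range (p + 1)).filter (fun m => 3 ∣ p + m - 1),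
        (p.choose m : ℂ) * Complex.exp (Complex.I * (((2 * (m : ℝ) - (p : ℝ)) * θ : ℝ) : ℂ))
      = (1 / 3) * ((Complex.exp (Complex.I * (θ:ℂ)) + Complex.exp (-(Complex.I * (θ:ℂ)))) ^ p + ((-1 + (Real.sqrt 3 : ℂ) * Complex.I) / 2) ^ (p - 1) * (((-1 + (Real.sqrt 3 : ℂ) * Complex.I) / 2) * Complex.exp (Complex.I * (θ:ℂ)) + Complex.exp (-(Complex.I * (θ:ℂ)))) ^ p
          + ((-1 + (Real.sqrt 3 : ℂ) * Complex.I) / 2) ^ (2 * (p - 1)) * (((-1 + (Real.sqrt 3 : ℂ) * Complex.I) / 2) ^ 2 * Complex.exp (Complex.I * (θ:ℂ)) + Complex.exp (-(Complex.I * (θ:ℂ)))) ^ p) := by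
    rw [Finset.sum_filter]
    have step1 : ∀ m ∈ range (p + 1),
        (if 3 ∣ p + m - 1 then (p.choose m : ℂ) *
            Complex.exp (Complex.I * (((2 * (m : ℝ) - (p : ℝ)) * θ : ℝ) : ℂ)) else 0)
        = (1 / 3) * ((p.choose m : ℂ) * ((1 * Complex.exp (Complex.I * (θ:ℂ))) ^ m * Complex.exp (-(Complex.I * (θ:ℂ))) ^ (p - m))
            + ((-1 + (Real.sqrt 3 : ℂ) * Complex.I) / 2) ^ (p - 1) * ((p.choose m : ℂ) * ((((-1 + (Real.sqrt 3 : ℂ) * Complex.I) / 2) * Complex.exp (Complex.I * (θ:ℂ))) ^ m * Complex.exp (-(Complex.I * (θ:ℂ))) ^ (p - m)))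
            + ((-1 + (Real.sqrt 3 : ℂ) * Complex.I) / 2) ^ (2 * (p - 1)) * ((p.choose m : ℂ) * ((((-1 + (Real.sqrt 3 : ℂ) * Complex.I) / 2) ^ 2 * Complex.exp (Complex.I * (θ:ℂ))) ^ m * Complex.exp (-(Complex.I * (θ:ℂ))) ^ (p - m)))) := by
      intro m hm
      have hm' : m ≤ p := by simpa [Nat.lt_succ_iff] using Finset.mem_range.mp hm
      rw [hE m hm']
      have hd : p + m - 1 = (p - 1) + m := by omega
      rw [hd]
      have hf := cube_filter_aux ((-1 + (Real.sqrt 3 : ℂ) * Complex.I) / 2) hω3 hωs ((p - 1) + m)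
      have hp1 : ((-1 + (Real.sqrt 3 : ℂ) * Complex.I) / 2) ^ ((p - 1) + m) = ((-1 + (Real.sqrt 3 : ℂ) * Complex.I) / 2) ^ (p - 1) * ((-1 + (Real.sqrt 3 : ℂ) * Complex.I) / 2) ^ m := pow_add _ _ _
      have hp2 : ((-1 + (Real.sqrt 3 : ℂ) * Complex.I) / 2) ^ (2 * ((p - 1) + m)) = ((-1 + (Real.sqrt 3 : ℂ) * Complex.I) / 2) ^ (2 * (p - 1)) * (((-1 + (Real.sqrt 3 : ℂ) * Complex.I) / 2) ^ 2) ^ m := by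
        rw [mul_add, pow_add, pow_mul, pow_mul]
      by_cases h : 3 ∣ (p - 1) + m
      · rw [if_pos h] at hf ⊢
        rw [hp1, hp2] at hf
        rw [mul_pow, mul_pow, mul_pow]
        linear_combination ((p.choose m : ℂ) * Complex.exp (Complex.I * (θ:ℂ)) ^ m * Complex.exp (-(Complex.I * (θ:ℂ))) ^ (p - m) / 3) * hf
      · rw [if_neg h] at hf ⊢
        rw [hp1, hp2] at hf
        rw [mul_pow, mul_pow, mul_pow]
        linear_combination ((p.choose m : ℂ) * Complex.exp (Complex.I * (θ:ℂ)) ^ m * Complex.exp (-(Complex.I * (θ:ℂ))) ^ (p - m) / 3) * hf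
    rw [Finset.sum_congr rfl step1, ← Finset.mul_sum]
    congr 1
    rw [Finset.sum_add_distrib, Finset.sum_add_distrib, ← Finset.mul_sum, ← Finset.mul_sum,
      binom 1, binom ((-1 + (Real.sqrt 3 : ℂ) * Complex.I) / 2), binom (((-1 + (Real.sqrt 3 : ℂ) * Complex.I) / 2) ^ 2), one_mul]
  have hph1 : ((-1 + (Real.sqrt 3 : ℂ) * Complex.I) / 2) ^ (p - 1) * ((1 + (Real.sqrt 3 : ℂ) * Complex.I) / 2) ^ p = (-1 : ℂ) ^ (p - 1) * ((1 + (Real.sqrt 3 : ℂ) * Complex.I) / 2) := by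
    rw [hωu, ← pow_mul, ← pow_add, show 2 * (p - 1) + p = 3 * (p - 1) + 1 by omega,
      pow_add, pow_mul, hu3, pow_one]
  have hph2 : ((-1 + (Real.sqrt 3 : ℂ) * Complex.I) / 2) ^ (2 * (p - 1)) * ((-1 + (Real.sqrt 3 : ℂ) * Complex.I) / 2) ^ p = ((-1 + (Real.sqrt 3 : ℂ) * Complex.I) / 2) := by
    rw [← pow_add, show 2 * (p - 1) + p = 3 * (p - 1) + 1 by omega,
      pow_add, pow_mul, hω3, one_pow, pow_one, one_mul]
  have hneg : (-1 : ℂ) ^ p = -(-1 : ℂ) ^ (p - 1) := by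
    conv_lhs => rw [show p = (p - 1) + 1 by omega]
    rw [pow_succ]; ring
  have h2p : (2 : ℂ) ^ p ≠ 0 := pow_ne_zero _ (by norm_num)
  have key : ((2 : ℂ) ^ p)⁻¹ * ((1 / 3) * ((2 * ((Real.cos θ : ℝ) : ℂ)) ^ p + ((-1 + (Real.sqrt 3 : ℂ) * Complex.I) / 2) ^ (p - 1) * (2 * (((1 + (Real.sqrt 3 : ℂ) * Complex.I) / 2) * ((Real.cos (θ + Real.pi / 3) : ℝ) : ℂ))) ^ p
        + ((-1 + (Real.sqrt 3 : ℂ) * Complex.I) / 2) ^ (2 * (p - 1)) * (-2 * (((-1 + (Real.sqrt 3 : ℂ) * Complex.I) / 2) * ((Real.cos (θ - Real.pi / 3) : ℝ) : ℂ))) ^ p))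
      = 1 / 3 * (((Real.cos θ : ℝ) : ℂ) ^ p + (-1 : ℂ) ^ (p - 1) * (((1 + (Real.sqrt 3 : ℂ) * Complex.I) / 2) * ((Real.cos (θ + Real.pi / 3) : ℝ) : ℂ) ^ p)
          - (-1 : ℂ) ^ (p - 1) * (((-1 + (Real.sqrt 3 : ℂ) * Complex.I) / 2) * ((Real.cos (θ - Real.pi / 3) : ℝ) : ℂ) ^ p)) := by
    have ea : (2 * ((Real.cos θ : ℝ) : ℂ)) ^ p = 2 ^ p * ((Real.cos θ : ℝ) : ℂ) ^ p := mul_pow _ _ _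
    have eb : (2 * (((1 + (Real.sqrt 3 : ℂ) * Complex.I) / 2) * ((Real.cos (θ + Real.pi / 3) : ℝ) : ℂ))) ^ p = 2 ^ p * (((1 + (Real.sqrt 3 : ℂ) * Complex.I) / 2) ^ p * ((Real.cos (θ + Real.pi / 3) : ℝ) : ℂ) ^ p) := by rw [mul_pow, mul_pow]
    have ec : (-2 * (((-1 + (Real.sqrt 3 : ℂ) * Complex.I) / 2) * ((Real.cos (θ - Real.pi / 3) : ℝ) : ℂ))) ^ p = (-1) ^ p * (2 ^ p * (((-1 + (Real.sqrt 3 : ℂ) * Complex.I) / 2) ^ p * ((Real.cos (θ - Real.pi / 3) : ℝ) : ℂ) ^ p)) := by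
      rw [show (-2 : ℂ) = -1 * 2 by norm_num, mul_pow, mul_pow, mul_pow]; ring
    rw [ea, eb, ec, hneg, inv_mul_eq_iff_eq_mul₀ h2p]
    linear_combination ((2 : ℂ) ^ p * ((Real.cos (θ + Real.pi / 3) : ℝ) : ℂ) ^ p / 3) * hph1 -
      ((2 : ℂ) ^ p * (-1 : ℂ) ^ (p - 1) * ((Real.cos (θ - Real.pi / 3) : ℝ) : ℂ) ^ p / 3) * hph2
  rw [hsum, e1, e2, e3, key]
  push_cast [-Complex.ofReal_cos, -Complex.ofReal_sin]
  ring
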